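/- Let R be a unital associative ring, M a nonzero left R-module, Ω an infinite set, N = ⊕_{i∈Ω} M, and E = End_R(N). Let (U_i)_{i∈I} be any family of subsets of E such that ⋃_{i∈I} U_i = E and |I| ≤ |Ω|. Then Ω contains a moiety which is full with respect to some U_i. -/

import Mathlib

open Pointwise DirectSum Cardinal

/-- The submodule of the direct sum `⨁ i : Ω, M` consisting of elements supported on `S`. -/
def suppSubmodule (R : Type*) [Ring R] (M : Type*) [AddCommGroup M] [Module R M]
    (Ω : Type*) (S : Set Ω) : Submodule R (⨁ _ : Ω, M) where
  carrier := {x | ∀ i ∉ S, x i = 0}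
  add_mem' := fun {a b} ha hb i hi => by simp [ha i hi, hb i hi]
  zero_mem' := fun i _ => by simp
  smul_mem' := fun r a ha i hi => by rw [DirectSum.smul_apply, ha i hi, smul_zero]

/-- `S ⊆ Ω` is full with respect to `U ⊆ E`: every endomorphism of `M^S` is induced by
restriction of a member of `U` carrying `M^S` into `M^S` and `M^{Ω∖S}` into `M^{Ω∖S}`. -/
def IsFull (R : Type*) [Ring R] (M : Type*) [AddCommGroup M] [Module R M]
    (Ω : Type*) (U : Set (Module.End R (⨁ _ : Ω, M))) (S : Set Ω) : Prop :=
  ∀ g : Module.End R (suppSubmodule R M Ω S), ∃ f ∈ U,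
    (suppSubmodule R M Ω S).map f ≤ suppSubmodule R M Ω S ∧
    (suppSubmodule R M Ω Sᶜ).map f ≤ suppSubmodule R M Ω Sᶜ ∧
    ∀ v : suppSubmodule R M Ω S, f (v : ⨁ _ : Ω, M) = (g v : ⨁ _ : Ω, M)

section Aux

variable (R : Type*) [Ring R] (M : Type*) [AddCommGroup M] [Module R M] {Ω : Type*}
  [DecidableEq Ω]

lemma mem_suppSubmodule {S : Set Ω} {x : ⨁ _ : Ω, M} :
    x ∈ suppSubmodule R M Ω S ↔ ∀ i ∉ S, x i = 0 := Iff.rfl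

lemma suppSubmodule_mono {S T : Set Ω} (h : S ⊆ T) :
    suppSubmodule R M Ω S ≤ suppSubmodule R M Ω T :=
  fun _ hx i hi => hx i (fun hiS => hi (h hiS))

lemma of_mem_supp (S : Set Ω) (x : Ω) (hx : x ∈ S) (m : M) :
    DirectSum.of (fun _ : Ω => M) x m ∈ suppSubmodule R M Ω S := by
  intro i hi
  refine DirectSum.of_eq_of_ne _ _ _ (fun h => hi ?_)
  rw [h]; exact hx

/-- The block of `ω` under the equivalence `e`. -/
def blk (e : Ω ≃ Ω × Ω) (ω : Ω) : Set Ω := {x | (e x).1 = ω}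

/-- The blockwise endomorphism. -/
noncomputable def bigF (e : Ω ≃ Ω × Ω)
    (G : ∀ ω : Ω, Module.End R (suppSubmodule R M Ω (blk e ω))) :
    Module.End R (⨁ _ : Ω, M) :=
  DirectSum.toModule R Ω _ fun x =>
    (suppSubmodule R M Ω (blk e (e x).1)).subtype ∘ₗ (G (e x).1) ∘ₗ
      LinearMap.codRestrict _ (DirectSum.lof R Ω (fun _ => M) x)
        (fun m => of_mem_supp R M (blk e (e x).1) x rfl m)

variable (e : Ω ≃ Ω × Ω) (G : ∀ ω : Ω, Module.End R (suppSubmodule R M Ω (blk e ω)))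

lemma bigF_of (x : Ω) (m : M) :
    bigF R M e G (DirectSum.of (fun _ : Ω => M) x m)
      = ((G (e x).1 ⟨DirectSum.of (fun _ : Ω => M) x m,
          of_mem_supp R M (blk e (e x).1) x rfl m⟩ : _) : ⨁ _ : Ω, M) := by
  rw [bigF]
  exact DirectSum.toModule_lof (M := fun _ : Ω => M) (N := ⨁ _ : Ω, M) R x m

lemma bigF_apply (ω : Ω) (v : suppSubmodule R M Ω (blk e ω)) :
    bigF R M e G (v : ⨁ _ : Ω, M) = ((G ω v : _) : ⨁ _ : Ω, M) := by
  classical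
  obtain ⟨x, hx⟩ := v
  have wmem : ∀ j : Ω, DirectSum.of (fun _ : Ω => M) j (x j) ∈ suppSubmodule R M Ω (blk e ω) := by
    intro j i hi
    rcases eq_or_ne j i with rfl | hji
    · rw [DirectSum.of_eq_same]; exact hx j hi
    · exact DirectSum.of_eq_of_ne _ _ _ hji.symm
  have term : ∀ j : Ω,
      bigF R M e G (DirectSum.of (fun _ : Ω => M) j (x j))
        = ((G ω ⟨DirectSum.of (fun _ : Ω => M) j (x j), wmem j⟩ : _) : ⨁ _ : Ω, M) := by
    intro j
    by_cases hj : (e j).1 = ω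
    · subst hj
      rw [bigF_of]
    · have hxj : x j = 0 := hx j hj
      have h0 : (⟨DirectSum.of (fun _ : Ω => M) j (x j), wmem j⟩ :
          suppSubmodule R M Ω (blk e ω)) = 0 := by
        apply Subtype.ext
        simp [hxj]
      rw [h0, map_zero]
      simp [hxj]
  have hsum : (∑ j ∈ x.support, DirectSum.of (fun _ : Ω => M) j (x j)) = x :=
    DirectSum.sum_support_of x
  calc bigF R M e G x
      = bigF R M e G (∑ j ∈ x.support, DirectSum.of (fun _ : Ω => M) j (x j)) := by rw [hsum]
    _ = ∑ j ∈ x.support, bigF R M e G (DirectSum.of (fun _ : Ω => M) j (x j)) := map_sum _ _ _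
    _ = ∑ j ∈ x.support,
          ((G ω ⟨DirectSum.of (fun _ : Ω => M) j (x j), wmem j⟩ : _) : ⨁ _ : Ω, M) :=
        Finset.sum_congr rfl fun j _ => term j
    _ = ((G ω (∑ j ∈ x.support, ⟨DirectSum.of (fun _ : Ω => M) j (x j), wmem j⟩) : _) :
          ⨁ _ : Ω, M) := by rw [map_sum, Submodule.coe_sum]
    _ = ((G ω ⟨x, hx⟩ : _) : ⨁ _ : Ω, M) := by
        have h2 : (∑ j ∈ x.support,
            (⟨DirectSum.of (fun _ : Ω => M) j (x j), wmem j⟩ :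
              suppSubmodule R M Ω (blk e ω))) = ⟨x, hx⟩ := by
          apply Subtype.ext
          rw [Submodule.coe_sum]
          exact hsum
        rw [h2]

lemma bigF_compl (ω : Ω) :
    (suppSubmodule R M Ω (blk e ω)ᶜ).map (bigF R M e G) ≤ suppSubmodule R M Ω (blk e ω)ᶜ := by
  classical
  rintro _ ⟨x, hx, rfl⟩
  have hterm : ∀ j : Ω, bigF R M e G (DirectSum.of (fun _ : Ω => M) j (x j))
      ∈ suppSubmodule R M Ω (blk e ω)ᶜ := by
    intro j
    by_cases hj : (e j).1 = ω
    · have hxj : x j = 0 := hx j (by simpa [blk] using hj)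
      rw [hxj, map_zero, map_zero]
      exact Submodule.zero_mem _
    · rw [bigF_of]
      refine suppSubmodule_mono R M ?_ (SetLike.coe_mem _)
      intro y hy
      simp only [blk, Set.mem_setOf_eq] at hy
      simp only [Set.mem_compl_iff, blk, Set.mem_setOf_eq]
      rw [hy]
      exact hj
  have hsum : (∑ j ∈ x.support, DirectSum.of (fun _ : Ω => M) j (x j)) = x :=
    DirectSum.sum_support_of x
  rw [← hsum, map_sum]
  exact Submodule.sum_mem _ fun j _ => hterm j

end Aux

universe u v

theorem stmt2 (R : Type*) [Ring R] (M : Type*) [AddCommGroup M] [Module R M]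
    [Nontrivial M] (Ω : Type u) [Infinite Ω] (I : Type v)
    (U : I → Set (Module.End R (⨁ _ : Ω, M)))
    (hunion : (⋃ i : I, U i) = Set.univ)
    (hcard : Cardinal.lift.{u} #I ≤ Cardinal.lift.{v} #Ω) :
    ∃ (i : I) (S : Set Ω), (#(↥S) = #Ω ∧ #(↥(Sᶜ : Set Ω)) = #Ω) ∧ IsFull R M Ω (U i) S := by
  classical
  letI : DecidableEq Ω := Classical.decEq Ω
  obtain ⟨ι⟩ : Nonempty (I ↪ Ω) := Cardinal.lift_mk_le'.mp hcard
  obtain ⟨e⟩ : Nonempty (Ω ≃ Ω × Ω) := by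
    rw [← Cardinal.eq, ← Cardinal.mul_def]
    exact (Cardinal.mul_eq_self (Cardinal.aleph0_le_mk Ω)).symm
  have hmoiety : ∀ ω : Ω, #(↥(blk e ω)) = #Ω ∧ #(↥(blk e ω)ᶜ) = #Ω := by
    intro ω
    constructor
    · refine Cardinal.mk_congr ⟨fun x => (e x.1).2, fun j => ⟨e.symm (ω, j), ?_⟩, ?_, ?_⟩
      · show (e (e.symm (ω, j))).1 = ω
        simp
      · intro x
        apply Subtype.ext
        have hx : (e x.1).1 = ω := x.2
        simp [← hx]
      · intro j
        simp
    · apply le_antisymm (Cardinal.mk_set_le _)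
      obtain ⟨ω', hω'⟩ := exists_ne ω
      refine Cardinal.mk_le_of_injective (f := fun j => (⟨e.symm (ω', j), ?_⟩ : ↥(blk e ω)ᶜ)) ?_
      · show ¬ (e (e.symm (ω', j))).1 = ω
        simpa using hω'
      · intro a b hab
        have := congrArg (fun z : ↥(blk e ω)ᶜ => (e z.1).2) hab
        simpa using this
  by_contra hcon
  push_neg at hcon
  have hex : ∀ i : I, ∃ g : Module.End R (suppSubmodule R M Ω (blk e (ι i))),
      ∀ f ∈ U i, ¬ ((suppSubmodule R M Ω (blk e (ι i))).map f ≤ suppSubmodule R M Ω (blk e (ι i)) ∧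
        (suppSubmodule R M Ω (blk e (ι i))ᶜ).map f ≤ suppSubmodule R M Ω (blk e (ι i))ᶜ ∧
        ∀ v : suppSubmodule R M Ω (blk e (ι i)), f (v : ⨁ _ : Ω, M) = (g v : ⨁ _ : Ω, M)) := by
    intro i
    have h := hcon i (blk e (ι i)) (hmoiety (ι i))
    rw [IsFull] at h
    push_neg at h
    obtain ⟨g, hg⟩ := h
    exact ⟨g, fun f hf => by have := hg f hf; tauto⟩
  choose g hg using hex
  let G : ∀ ω : Ω, Module.End R (suppSubmodule R M Ω (blk e ω)) := fun ω =>
    if h : ∃ i, ι i = ω then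
      cast (by rw [h.choose_spec]) (g h.choose)
    else 1
  have hGι : ∀ i : I, G (ι i) = g i := by
    intro i
    have h : ∃ i', ι i' = ι i := ⟨i, rfl⟩
    have key : ∀ (i' : I) (hh : ι i' = ι i),
        cast (congrArg (fun ω => Module.End R (suppSubmodule R M Ω (blk e ω))) hh) (g i') = g i := by
      intro i' hh
      obtain rfl : i' = i := ι.injective hh
      exact cast_eq _ _
    show (if h : ∃ i', ι i' = ι i then cast (by rw [h.choose_spec]) (g h.choose) else 1) = g i
    rw [dif_pos h]
    exact key h.choose h.choose_spec
  set f := bigF R M e G with hf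
  have hfmem : f ∈ ⋃ i : I, U i := by rw [hunion]; trivial
  obtain ⟨Ui, ⟨i0, rfl⟩, hfi0⟩ := hfmem
  refine hg i0 f hfi0 ⟨?_, ?_, ?_⟩
  · rintro _ ⟨a, ha, rfl⟩
    rw [hf, bigF_apply R M e G (ι i0) ⟨a, ha⟩]
    exact SetLike.coe_mem _
  · exact bigF_compl R M e G (ι i0)
  · intro v
    rw [hf, bigF_apply R M e G (ι i0) v, hGι i0]
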